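/- Let m ≥ 1 and let an a×b-orchard have a ≥ 2 horizontal paths. Then each vertical tree of the orchard contains at most 1 + 3(a−2) vertical sections; in particular fewer than a² vertical sections. -/

import Mathlib

open SimpleGraph Finset

attribute [local instance] Classical.propDecidable

set_option maxHeartbeats 1000000

section Helpers
variable {V : Type} [Fintype V]

/-- An induced subgraph of an acyclic graph, if connected, is a tree. -/
lemma aux_induce_isTree {G : SimpleGraph V} (hac : G.IsAcyclic) {A : Set V}
    (h : (G.induce A).Connected) : (G.induce A).IsTree := by
  refine ⟨h, ?_⟩
  intro v c hc
  exact hac (c.map (SimpleGraph.Embedding.induce A).toHom)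
    (hc.map Subtype.val_injective)

/-- Lifting a walk to an induced subgraph containing the support. -/
lemma aux_walk_reach {G : SimpleGraph V} {B : Set V} {x y : V} (p : G.Walk x y)
    (hp : ∀ z ∈ p.support, z ∈ B) (hx : x ∈ B) (hy : y ∈ B) :
    (G.induce B).Reachable ⟨x, hx⟩ ⟨y, hy⟩ := by
  induction p with
  | nil => rfl
  | @cons u v w h q ih =>
      have hv : v ∈ B := hp v (by simp)
      have h1 : (G.induce B).Adj ⟨u, hx⟩ ⟨v, hv⟩ := by
        simp only [comap_adj, Function.Embedding.coe_subtype]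
        exact h
      exact (h1.reachable).trans (ih (fun z hz => hp z (by simp [hz])) hv hy)

/-- The induced graph on (the image of) the support of a connected component
of an induced graph is connected. -/
lemma aux_comp_connected {G : SimpleGraph V} {R : Set V}
    (c : (G.induce R).ConnectedComponent) :
    (G.induce (Subtype.val '' c.supp)).Connected := by
  classical
  obtain ⟨u, hu⟩ := c.exists_rep
  rw [connected_iff]
  constructor
  · rintro ⟨x, hx⟩ ⟨y, hy⟩
    obtain ⟨x', hx', rfl⟩ := hx
    obtain ⟨y', hy', rfl⟩ := hy
    rw [ConnectedComponent.mem_supp_iff] at hx' hy'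
    have hr : (G.induce R).Reachable x' y' := by
      rw [← ConnectedComponent.eq, hx', hy']
    obtain ⟨q⟩ := hr
    -- map q into G
    have hsupp : ∀ z ∈ (q.map (SimpleGraph.Embedding.induce R).toHom).support,
        z ∈ Subtype.val '' c.supp := by
      intro z hz
      simp only [Walk.support_map, List.mem_map] at hz
      obtain ⟨z', hz', rfl⟩ := hz
      refine ⟨z', ?_, rfl⟩
      rw [ConnectedComponent.mem_supp_iff, ← hx']
      exact ConnectedComponent.sound ((q.takeUntil z' hz').reachable.symm)
    exact aux_walk_reach _ hsupp ⟨x', hx', rfl⟩ ⟨y', hy', rfl⟩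
  · exact ⟨⟨u.val, u, hu ▸ rfl, rfl⟩⟩
end Helpers
section Helpers3
variable {V : Type} [Fintype V] [DecidableEq V]



lemma aux_edge_image {G : SimpleGraph V} (A : Set V) :
    {e ∈ G.edgeSet | ∀ v ∈ e, v ∈ A} = Sym2.map Subtype.val '' (G.induce A).edgeSet := by
  ext e
  induction e with
  | _ x y =>
    constructor
    · rintro ⟨hadj, hall⟩
      rw [mem_edgeSet] at hadj
      have hx : x ∈ A := hall x (by simp)
      have hy : y ∈ A := hall y (by simp)
      exact ⟨s(⟨x, hx⟩, ⟨y, hy⟩), by simpa using hadj, by simp⟩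
    · rintro ⟨e', he', hmap⟩
      induction e' with
      | _ u v =>
        simp only [Sym2.map_pair_eq] at hmap
        rw [← hmap]
        refine ⟨by simpa using he', ?_⟩
        intro z hz
        rw [Sym2.mem_iff] at hz
        rcases hz with rfl | rfl
        · exact u.2
        · exact v.2

/-- Cardinality correspondence between induced edges and edges inside `A`. -/
lemma aux_edge_corr {G : SimpleGraph V} (A : Set V) :
    {e ∈ G.edgeSet | ∀ v ∈ e, v ∈ A}.ncard = (G.induce A).edgeSet.ncard := by
  rw [aux_edge_image, Set.ncard_image_of_injective _ (Sym2.map.injective Subtype.val_injective)]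

/-- Each connected block of an acyclic graph spans exactly `|A| - 1` edges. -/
lemma aux_block_count {G : SimpleGraph V} (hac : G.IsAcyclic) {A : Set V}
    (h : (G.induce A).Connected) :
    {e ∈ G.edgeSet | ∀ v ∈ e, v ∈ A}.ncard + 1 = A.ncard := by
  classical
  have ht : (G.induce A).IsTree := by
    refine ⟨h, ?_⟩
    intro v c hc
    exact hac (c.map (SimpleGraph.Embedding.induce A).toHom) (hc.map Subtype.val_injective)
  haveI : Fintype ↥A := Fintype.ofFinite _
  haveI : Fintype ((G.induce A).edgeSet) := Fintype.ofFinite _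
  have h1 := ht.card_edgeFinset
  rw [aux_edge_corr]
  have h2 : (G.induce A).edgeSet.ncard = (G.induce A).edgeFinset.card := by
    rw [← Nat.card_coe_set_eq, Nat.card_eq_fintype_card, ← edgeFinset_card]
  have h3 : A.ncard = Fintype.card ↥A := by
    rw [← Nat.card_coe_set_eq, Nat.card_eq_fintype_card]
  rw [h2, h3, h1]



lemma aux_handshake_split {G : SimpleGraph V} [DecidableRel G.Adj] (A : Set V)
    [DecidablePred (· ∈ A)] :
    ∑ v ∈ Finset.univ.filter (· ∈ A), (G.neighborSet v).ncard
      = 2 * {e ∈ G.edgeSet | ∀ v ∈ e, v ∈ A}.ncard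
        + {e ∈ G.edgeSet | (∃ v ∈ e, v ∈ A) ∧ ¬ ∀ v ∈ e, v ∈ A}.ncard := by
  classical
  -- replace ncard by neighborFinset card and split by membership in A
  have hdeg : ∀ v : V, (G.neighborSet v).ncard
      = ((G.neighborFinset v).filter (· ∈ A)).card
        + ((G.neighborFinset v).filter (¬ · ∈ A)).card := by
    intro v
    rw [Finset.card_filter_add_card_filter_not]
    rw [← Set.ncard_coe_finset, neighborFinset_def, Set.coe_toFinset]
  simp_rw [hdeg, Finset.sum_add_distrib]
  congr 1
  · -- internal part
    haveI : Fintype ↥A := Fintype.ofFinite _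
    haveI : Fintype ((G.induce A).edgeSet) := Fintype.ofFinite _
    have hhs := (G.induce A).sum_degrees_eq_twice_card_edges
    have hd : ∀ u : ↥A, (G.induce A).degree u
        = ((G.neighborFinset u.val).filter (· ∈ A)).card := by
      intro u
      rw [← card_neighborFinset_eq_degree]
      refine Finset.card_bij (fun x _ => x.val) ?_ ?_ ?_
      · rintro x hx
        simp only [mem_neighborFinset] at hx
        simp only [Finset.mem_filter, mem_neighborFinset]
        exact ⟨hx, x.2⟩
      · intro x _ y _ h; exact Subtype.val_injective h
      · intro y hy
        simp only [Finset.mem_filter, mem_neighborFinset] at hy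
        exact ⟨⟨y, hy.2⟩, by simp only [mem_neighborFinset]; exact hy.1, rfl⟩
    have hre : ∑ v ∈ Finset.univ.filter (· ∈ A), ((G.neighborFinset v).filter (· ∈ A)).card
        = ∑ u : ↥A, (G.induce A).degree u := by
      rw [Finset.sum_subtype (p := (· ∈ A)) (Finset.univ.filter (· ∈ A)) (by simp)
        (fun v => ((G.neighborFinset v).filter (· ∈ A)).card)]
      exact Finset.sum_congr rfl (fun u _ => (hd u).symm)
    rw [hre, hhs, aux_edge_corr]
    congr 1
    rw [← Nat.card_coe_set_eq, Nat.card_eq_fintype_card, ← edgeFinset_card]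
    congr!
  · -- crossing part
    rw [← Finset.card_sigma]
    rw [Set.ncard_eq_toFinset_card']
    refine Finset.card_bij (fun p _ => s(p.1, p.2)) ?_ ?_ ?_
    · rintro ⟨v, x⟩ hp
      simp only [Finset.mem_sigma, Finset.mem_filter, mem_neighborFinset, Finset.mem_univ,
        true_and] at hp
      obtain ⟨hv, hadj, hx⟩ := hp
      simp only [Set.mem_toFinset, Set.mem_setOf_eq, mem_edgeSet]
      refine ⟨hadj, ⟨v, by simp, hv⟩, ?_⟩
      intro hall
      exact hx (hall x (by simp))
    · rintro ⟨v, x⟩ hp ⟨v', x'⟩ hp' h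
      simp only [Finset.mem_sigma, Finset.mem_filter, mem_neighborFinset, Finset.mem_univ,
        true_and] at hp hp'
      rw [Sym2.eq_iff] at h
      rcases h with ⟨rfl, rfl⟩ | ⟨rfl, rfl⟩
      · rfl
      · exact absurd hp'.1 hp.2.2
    · intro e he
      simp only [Set.mem_toFinset, Set.mem_setOf_eq] at he
      obtain ⟨hee, ⟨v, hve, hvA⟩, hnall⟩ := he
      induction e with
      | _ x y =>
        rw [mem_edgeSet] at hee
        rw [Sym2.mem_iff] at hve
        have hxory : ¬ (x ∈ A ∧ y ∈ A) := by
          intro ⟨h1, h2⟩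
          exact hnall (fun z hz => by rcases Sym2.mem_iff.mp hz with rfl | rfl <;> assumption)
        rcases hve with rfl | rfl
        · have hy : y ∉ A := fun hy => hxory ⟨hvA, hy⟩
          exact ⟨⟨v, y⟩, by simp [hvA, hy, hee, mem_neighborFinset], rfl⟩
        · have hx : x ∉ A := fun hx => hxory ⟨hx, hvA⟩
          exact ⟨⟨v, x⟩, by simp [hvA, hx, hee.symm, mem_neighborFinset], Sym2.eq_swap⟩

end Helpers3
lemma aux_boundary {V : Type} {G : SimpleGraph V} {A : Set V} {u x : V} (p : G.Walk u x)
    (hu : u ∈ A) (hx : x ∉ A) : ∃ v w, G.Adj v w ∧ v ∈ A ∧ w ∉ A := by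
  induction p with
  | nil => exact absurd hu hx
  | @cons a b c h q ih =>
      by_cases hb : b ∈ A
      · exact ih hb hx
      · exact ⟨a, b, h, hu, hb⟩
section M
variable {V : Type} [Fintype V] {ι : Type} [Fintype ι]

lemma aux_conv {G : SimpleGraph V} [Fintype G.edgeSet] (P : Sym2 V → Prop) [DecidablePred P] :
    {e ∈ G.edgeSet | P e}.ncard = (G.edgeFinset.filter P).card := by
  rw [← Set.ncard_coe_finset]
  congr 1
  ext e
  simp [mem_edgeFinset]

/-- Number of crossing edges of a tree whose blocks are connected. -/
lemma aux_M1 {G : SimpleGraph V} (hT : G.IsTree) (f : V → ι)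
    (hBconn : ∀ i, (G.induce {v | f v = i}).Connected) :
    {e ∈ G.edgeSet | ¬ ∃ i, ∀ v ∈ e, f v = i}.ncard + 1 = Fintype.card ι := by
  classical
  haveI : Fintype G.edgeSet := Fintype.ofFinite _
  rw [aux_conv]
  have hblk : ∀ i, (G.edgeFinset.filter (fun e => ∀ v ∈ e, f v = i)).card + 1
      = {v | f v = i}.ncard := by
    intro i
    have h := aux_block_count hT.IsAcyclic (hBconn i)
    have hcoe : ↑(G.edgeFinset.filter (fun e => ∀ v ∈ e, f v = i))
        = {e ∈ G.edgeSet | ∀ v ∈ e, v ∈ {v | f v = i}} := by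
      ext e; simp [Set.mem_setOf_eq]
    rw [← h, ← hcoe, Set.ncard_coe_finset]
  have hpart : G.edgeFinset.card = ∑ o : Option ι, (G.edgeFinset.filter
      (fun e => (if h : ∃ i, ∀ v ∈ e, f v = i then some h.choose else none) = o)).card :=
    Finset.card_eq_sum_card_fiberwise (fun e _ => Finset.mem_univ _)
  rw [Fintype.sum_option] at hpart
  have hnone : G.edgeFinset.filter
      (fun e => (if h : ∃ i, ∀ v ∈ e, f v = i then some h.choose else none) = none)
      = G.edgeFinset.filter (fun e => ¬ ∃ i, ∀ v ∈ e, f v = i) := by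
    apply Finset.filter_congr
    intro e _
    by_cases h : ∃ i, ∀ v ∈ e, f v = i <;> simp [h]
  have hsome : ∀ i : ι, G.edgeFinset.filter
      (fun e => (if h : ∃ i, ∀ v ∈ e, f v = i then some h.choose else none) = some i)
      = G.edgeFinset.filter (fun e => ∀ v ∈ e, f v = i) := by
    intro i
    apply Finset.filter_congr
    intro e _
    by_cases h : ∃ j, ∀ v ∈ e, f v = j
    · simp only [dif_pos h, Option.some.injEq]
      constructor
      · rintro rfl; exact h.choose_spec
      · intro hh
        have h1 := h.choose_spec e.out.1 (Sym2.out_fst_mem e)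
        have h2 := hh e.out.1 (Sym2.out_fst_mem e)
        rw [← h1, ← h2]
    · simp only [dif_neg h]
      constructor
      · intro hh; simp at hh
      · intro hh; exact absurd ⟨i, hh⟩ h
  rw [hnone] at hpart
  simp_rw [hsome] at hpart
  have hfib : ∑ i : ι, {v | f v = i}.ncard = Fintype.card V := by
    have h0 : (Finset.univ : Finset V).card
        = ∑ i : ι, (Finset.univ.filter (fun v => f v = i)).card :=
      Finset.card_eq_sum_card_fiberwise (fun v _ => Finset.mem_univ _)
    have h1 : ∀ i : ι, {v | f v = i}.ncard = (Finset.univ.filter (fun v => f v = i)).card := by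
      intro i
      rw [← Set.ncard_coe_finset]
      congr 1
      ext v; simp
    simp_rw [h1]
    rw [← h0, Finset.card_univ]
  have hedge := hT.card_edgeFinset
  have hsum : ∑ i : ι, ((G.edgeFinset.filter (fun e => ∀ v ∈ e, f v = i)).card + 1)
      = Fintype.card V := by
    rw [Finset.sum_congr rfl (fun i _ => hblk i), hfib]
  rw [Finset.sum_add_distrib, Finset.sum_const, smul_eq_mul, mul_one, Finset.card_univ] at hsum
  omega

/-- Each crossing edge meets exactly two blocks. -/
lemma aux_M2 {G : SimpleGraph V} (f : V → ι) :
    ∑ i : ι, {e ∈ G.edgeSet | (¬ ∃ j, ∀ v ∈ e, f v = j) ∧ ∃ v ∈ e, f v = i}.ncard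
      = 2 * {e ∈ G.edgeSet | ¬ ∃ j, ∀ v ∈ e, f v = j}.ncard := by
  classical
  haveI : Fintype G.edgeSet := Fintype.ofFinite _
  rw [aux_conv]
  have hconv2 : ∀ i : ι, {e ∈ G.edgeSet | (¬ ∃ j, ∀ v ∈ e, f v = j) ∧ ∃ v ∈ e, f v = i}.ncard
      = ((G.edgeFinset.filter (fun e => ¬ ∃ j, ∀ v ∈ e, f v = j)).filter
          (fun e => ∃ v ∈ e, f v = i)).card := by
    intro i
    rw [Finset.filter_filter, ← aux_conv]
  simp_rw [hconv2]
  calc ∑ i : ι, ((G.edgeFinset.filter (fun e => ¬ ∃ j, ∀ v ∈ e, f v = j)).filter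
        (fun e => ∃ v ∈ e, f v = i)).card
      = ∑ i : ι, ∑ e ∈ G.edgeFinset.filter (fun e => ¬ ∃ j, ∀ v ∈ e, f v = j),
          (if ∃ v ∈ e, f v = i then 1 else 0) := by
        refine Finset.sum_congr rfl (fun i _ => ?_)
        rw [Finset.card_filter]
    _ = ∑ e ∈ G.edgeFinset.filter (fun e => ¬ ∃ j, ∀ v ∈ e, f v = j),
          ∑ i : ι, (if ∃ v ∈ e, f v = i then 1 else 0) := Finset.sum_comm
    _ = ∑ e ∈ G.edgeFinset.filter (fun e => ¬ ∃ j, ∀ v ∈ e, f v = j), 2 := by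
        refine Finset.sum_congr rfl (fun e he => ?_)
        rw [Finset.mem_filter] at he
        obtain ⟨hee, hne⟩ := he
        rw [← Finset.card_filter]
        revert hne
        induction e using Sym2.inductionOn with
        | _ x y =>
          intro hne
          have hfxy : f x ≠ f y := by
            intro hxy
            refine hne ⟨f y, ?_⟩
            intro v hv
            rcases Sym2.mem_iff.mp hv with rfl | rfl
            · exact hxy
            · rfl
          have hset : Finset.univ.filter (fun i => ∃ v ∈ s(x, y), f v = i) = {f x, f y} := by
            ext i
            simp only [Finset.mem_filter, Finset.mem_univ, true_and, Finset.mem_insert,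
              Finset.mem_singleton, Sym2.mem_iff]
            constructor
            · rintro ⟨v, (rfl | rfl), rfl⟩
              · exact Or.inl rfl
              · exact Or.inr rfl
            · rintro (rfl | rfl)
              · exact ⟨x, Or.inl rfl, rfl⟩
              · exact ⟨y, Or.inr rfl, rfl⟩
          rw [hset, Finset.card_pair hfxy]
    _ = 2 * (G.edgeFinset.filter (fun e => ¬ ∃ j, ∀ v ∈ e, f v = j)).card := by
        rw [Finset.sum_const, smul_eq_mul, mul_comm]

/-- Handshake identity for a single connected block of an acyclic graph. -/
lemma aux_M3 {G : SimpleGraph V} (hac : G.IsAcyclic) (f : V → ι) (i : ι)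
    (hBconn : (G.induce {v | f v = i}).Connected) :
    ∑ v ∈ Finset.univ.filter (· ∈ {v | f v = i}), (G.neighborSet v).ncard + 2
      = 2 * {v | f v = i}.ncard
        + {e ∈ G.edgeSet | (¬ ∃ j, ∀ v ∈ e, f v = j) ∧ ∃ v ∈ e, f v = i}.ncard := by
  classical
  have hsplit := aux_handshake_split (G := G) {v | f v = i}
  have h1 := aux_block_count hac hBconn
  have hod : {e ∈ G.edgeSet | (¬ ∃ j, ∀ v ∈ e, f v = j) ∧ ∃ v ∈ e, f v = i}
      = {e ∈ G.edgeSet | (∃ v ∈ e, v ∈ {v | f v = i}) ∧ ¬ ∀ v ∈ e, v ∈ {v | f v = i}} := by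
    ext e
    simp only [Set.mem_setOf_eq]
    constructor
    · rintro ⟨hee, hne, hex⟩
      refine ⟨hee, hex, fun hall => hne ⟨i, hall⟩⟩
    · rintro ⟨hee, hex, hnall⟩
      refine ⟨hee, ?_, hex⟩
      rintro ⟨j, hj⟩
      obtain ⟨v0, hv0, hfv0⟩ := hex
      have : j = i := by rw [← hfv0]; exact (hj v0 hv0).symm
      subst this
      exact hnall hj
  rw [hod]
  omega

end M



section Orchard
variable {VT : Type} [Fintype VT] (T : SimpleGraph VT) {a : ℕ} (S : Fin a → Set VT)

def orchP : Set VT := ⋃ i, S i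

def orchW : Set VT := {w | w ∉ orchP S ∧ 3 ≤ (T.neighborSet w).ncard}

def orchR : Set VT := (orchP S ∪ orchW T S)ᶜ

noncomputable def blockOf (v : VT) :
    Fin a ⊕ (↥(orchW T S) ⊕ (T.induce (orchR T S)).ConnectedComponent) :=
  if h : ∃ i, v ∈ S i then Sum.inl h.choose
  else if hw : v ∈ orchW T S then Sum.inr (Sum.inl ⟨v, hw⟩)
  else Sum.inr (Sum.inr ((T.induce (orchR T S)).connectedComponentMk
    ⟨v, by
      simp only [orchR, Set.mem_compl_iff, Set.mem_union, orchP, Set.mem_iUnion]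
      push_neg
      exact ⟨fun i hi => h ⟨i, hi⟩, hw⟩⟩))

lemma blockOf_inl {v : VT} {i : Fin a}
    (hSdisj : ∀ i j, i ≠ j → Disjoint (S i) (S j)) :
    blockOf T S v = Sum.inl i ↔ v ∈ S i := by
  unfold blockOf
  split_ifs with h hw
  · simp only [Sum.inl.injEq]
    constructor
    · rintro rfl; exact h.choose_spec
    · intro hv; by_contra hne
      exact Set.disjoint_left.mp (hSdisj _ _ hne) h.choose_spec hv
  · exact ⟨fun hh => by simp at hh, fun hv => absurd ⟨i, hv⟩ h⟩
  · exact ⟨fun hh => by simp at hh, fun hv => absurd ⟨i, hv⟩ h⟩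

lemma blockOf_w {v : VT} {u : ↥(orchW T S)} :
    blockOf T S v = Sum.inr (Sum.inl u) ↔ v = u.val := by
  unfold blockOf
  split_ifs with h hw
  · refine ⟨fun hh => by simp at hh, ?_⟩
    rintro rfl
    exact absurd (Set.mem_iUnion.mpr h) u.2.1
  · simp only [Sum.inr.injEq, Sum.inl.injEq, Subtype.ext_iff]
  · refine ⟨fun hh => by simp at hh, ?_⟩
    rintro rfl
    exact absurd u.2 hw

lemma blockOf_c {v : VT} {c : (T.induce (orchR T S)).ConnectedComponent} :
    blockOf T S v = Sum.inr (Sum.inr c) ↔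
      ∃ h : v ∈ orchR T S, (T.induce (orchR T S)).connectedComponentMk ⟨v, h⟩ = c := by
  unfold blockOf
  split_ifs with h hw
  · refine ⟨fun hh => by simp at hh, ?_⟩
    rintro ⟨hv, -⟩
    rw [orchR, Set.mem_compl_iff, Set.mem_union] at hv
    exact hv (Or.inl (Set.mem_iUnion.mpr h))
  · refine ⟨fun hh => by simp at hh, ?_⟩
    rintro ⟨hv, -⟩
    rw [orchR, Set.mem_compl_iff, Set.mem_union] at hv
    exact absurd (Or.inr hw) hv
  · simp only [Sum.inr.injEq]
    exact ⟨fun hh => ⟨_, hh⟩, fun ⟨h', hh⟩ => hh⟩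

end Orchard

/-- Bound on the vertical sections on one vertical tree of an `a×b`-orchard, `a ≥ 2`.
`T` is a vertical tree; `S i` is the (nonempty, connected-in-`T`) intersection of `T`
with the `i`-th horizontal path, the sets `S i` being pairwise disjoint; every leaf of
`T` lies on some horizontal path. Writing `P = ⋃ i, S i` and
`W = {w ∉ P | deg_T w ≥ 3}`, the number of vertical sections of `T`, i.e.
`|W|` plus the number of components of `T − (P ∪ W)`, is at most `1 + 3(a−2)`;
in particular it is less than `a²`. -/
theorem vertical_sections_bound {VT : Type} [Fintype VT]
    (T : SimpleGraph VT) (hT : T.IsTree)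
    (a : ℕ) (ha : 2 ≤ a)
    (S : Fin a → Set VT)
    (hSne : ∀ i, (S i).Nonempty)
    (hSconn : ∀ i, (T.induce (S i)).Connected)
    (hSdisj : ∀ i j, i ≠ j → Disjoint (S i) (S j))
    (hleaf : ∀ w : VT, (T.neighborSet w).ncard ≤ 1 → w ∈ ⋃ i, S i) :
    (Set.ncard {w : VT | w ∉ (⋃ i, S i) ∧ 3 ≤ (T.neighborSet w).ncard} +
        Nat.card ((T.induce
          ((⋃ i, S i) ∪ {w : VT | w ∉ (⋃ i, S i) ∧
            3 ≤ (T.neighborSet w).ncard})ᶜ).ConnectedComponent)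
      ≤ 1 + 3 * (a - 2)) ∧
    (Set.ncard {w : VT | w ∉ (⋃ i, S i) ∧ 3 ≤ (T.neighborSet w).ncard} +
        Nat.card ((T.induce
          ((⋃ i, S i) ∪ {w : VT | w ∉ (⋃ i, S i) ∧
            3 ≤ (T.neighborSet w).ncard})ᶜ).ConnectedComponent)
      < a ^ 2) := by
  classical
  haveI : Fintype ↥(orchW T S) := Fintype.ofFinite _
  haveI : Fintype ((T.induce (orchR T S)).ConnectedComponent) := Fintype.ofFinite _
  haveI : Fintype T.edgeSet := Fintype.ofFinite _
  set f := blockOf T S with hf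
  -- fiber identifications
  have hfib_inl : ∀ i : Fin a, {v | f v = Sum.inl i} = S i := by
    intro i; ext v; rw [hf]; exact blockOf_inl T S hSdisj
  have hfib_w : ∀ u : ↥(orchW T S), {v | f v = Sum.inr (Sum.inl u)} = {u.val} := by
    intro u; ext v; rw [hf]; simpa using blockOf_w T S
  have hfib_c : ∀ c : (T.induce (orchR T S)).ConnectedComponent,
      {v | f v = Sum.inr (Sum.inr c)} = Subtype.val '' c.supp := by
    intro c; ext v
    rw [hf]
    constructor
    · intro h
      obtain ⟨hr, hm⟩ := (blockOf_c T S).mp h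
      exact ⟨⟨v, hr⟩, by rwa [ConnectedComponent.mem_supp_iff], rfl⟩
    · rintro ⟨⟨v', hv'⟩, hm, rfl⟩
      rw [ConnectedComponent.mem_supp_iff] at hm
      exact (blockOf_c T S).mpr ⟨hv', hm⟩
  have hBconn : ∀ i, (T.induce {v | f v = i}).Connected := by
    rintro (i | u | c)
    · rw [hfib_inl]; exact hSconn i
    · rw [hfib_w]
      haveI : Nonempty ↥({u.val} : Set VT) := ⟨⟨u.val, rfl⟩⟩
      rw [induce_singleton_eq_top]
      exact connected_top
    · rw [hfib_c]; exact aux_comp_connected c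
  -- counting
  have hM1 := aux_M1 hT f hBconn
  have hM2 := aux_M2 (G := T) f
  have hcard : Fintype.card
      (Fin a ⊕ (↥(orchW T S) ⊕ (T.induce (orchR T S)).ConnectedComponent))
      = a + (Fintype.card ↥(orchW T S)
          + Fintype.card ((T.induce (orchR T S)).ConnectedComponent)) := by
    simp
  -- lower bounds on boundary counts
  have hodS : ∀ i : Fin a,
      1 ≤ {e ∈ T.edgeSet | (¬ ∃ j, ∀ v ∈ e, f v = j) ∧ ∃ v ∈ e, f v = Sum.inl i}.ncard := by
    intro i
    obtain ⟨j, hj⟩ := Fintype.exists_ne_of_one_lt_card (by rw [Fintype.card_fin]; omega) i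
    obtain ⟨u, hu⟩ := hSne i
    obtain ⟨x, hx⟩ := hSne j
    have hxn : x ∉ S i := fun hxi => Set.disjoint_left.mp (hSdisj j i hj) hx hxi
    obtain ⟨p⟩ := hT.isConnected.preconnected u x
    obtain ⟨v, w, hadj, hvA, hwA⟩ := aux_boundary p hu hxn
    have hfv : f v = Sum.inl i := by rw [hf]; exact (blockOf_inl T S hSdisj).mpr hvA
    have hfw : f w ≠ Sum.inl i := by
      rw [hf]; exact fun hh => hwA ((blockOf_inl T S hSdisj).mp hh)
    refine (Set.ncard_pos (Set.toFinite _)).mpr ⟨s(v, w), (T.mem_edgeSet).mpr hadj, ?_, v, by simp, hfv⟩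
    rintro ⟨jj, hjj⟩
    have h1 := hjj v (by simp)
    have h2 := hjj w (by simp)
    exact hfw (by rw [h2, ← h1, hfv])
  have hodW : ∀ u : ↥(orchW T S),
      3 ≤ {e ∈ T.edgeSet | (¬ ∃ j, ∀ v ∈ e, f v = j)
          ∧ ∃ v ∈ e, f v = Sum.inr (Sum.inl u)}.ncard := by
    intro u
    have h3 := aux_M3 hT.IsAcyclic f (Sum.inr (Sum.inl u)) (hBconn _)
    simp only [hfib_w u] at h3
    have hfl : Finset.univ.filter (· ∈ ({u.val} : Set VT)) = {u.val} := by
      ext v; simp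
    rw [hfl, Finset.sum_singleton, Set.ncard_singleton] at h3
    have := u.2.2
    omega
  have hodC : ∀ c : (T.induce (orchR T S)).ConnectedComponent,
      {e ∈ T.edgeSet | (¬ ∃ j, ∀ v ∈ e, f v = j)
        ∧ ∃ v ∈ e, f v = Sum.inr (Sum.inr c)}.ncard = 2 := by
    intro c
    have h3 := aux_M3 hT.IsAcyclic f (Sum.inr (Sum.inr c)) (hBconn _)
    simp only [hfib_c c] at h3
    have hdeg : ∀ v ∈ Subtype.val '' c.supp, (T.neighborSet v).ncard = 2 := by
      rintro v ⟨vr, hm, rfl⟩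
      have hvR := vr.2
      simp only [orchR, Set.mem_compl_iff, Set.mem_union] at hvR
      push_neg at hvR
      obtain ⟨hnp, hnw⟩ := hvR
      have ge2 : ¬ ((T.neighborSet vr.val).ncard ≤ 1) := fun hle => hnp (hleaf vr.val hle)
      have le2 : ¬ (3 ≤ (T.neighborSet vr.val).ncard) := fun hge => hnw ⟨hnp, hge⟩
      omega
    have hsum2 : ∑ v ∈ Finset.univ.filter (· ∈ Subtype.val '' c.supp),
        (T.neighborSet v).ncard
        = 2 * (Subtype.val '' c.supp).ncard := by
      rw [Finset.sum_congr rfl (fun v hv => hdeg v (by simpa using hv)),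
        Finset.sum_const, smul_eq_mul, mul_comm]
      congr 1
      rw [← Set.ncard_coe_finset]
      congr 1
      ext v; simp
    rw [hsum2] at h3
    omega
  -- split the double count over the three kinds of blocks
  rw [Fintype.sum_sum_type, Fintype.sum_sum_type] at hM2
  have h1 : a ≤ ∑ i : Fin a,
      {e ∈ T.edgeSet | (¬ ∃ j, ∀ v ∈ e, f v = j) ∧ ∃ v ∈ e, f v = Sum.inl i}.ncard := by
    calc a = ∑ _i : Fin a, 1 := by simp
      _ ≤ _ := Finset.sum_le_sum (fun i _ => hodS i)
  have h2 : 3 * Fintype.card ↥(orchW T S) ≤ ∑ u : ↥(orchW T S),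
      {e ∈ T.edgeSet | (¬ ∃ j, ∀ v ∈ e, f v = j)
        ∧ ∃ v ∈ e, f v = Sum.inr (Sum.inl u)}.ncard := by
    calc 3 * Fintype.card ↥(orchW T S) = ∑ _u : ↥(orchW T S), 3 := by
          rw [Finset.sum_const, smul_eq_mul, mul_comm, Finset.card_univ]
      _ ≤ _ := Finset.sum_le_sum (fun u _ => hodW u)
  have hcsum : ∑ c : (T.induce (orchR T S)).ConnectedComponent,
      {e ∈ T.edgeSet | (¬ ∃ j, ∀ v ∈ e, f v = j)
        ∧ ∃ v ∈ e, f v = Sum.inr (Sum.inr c)}.ncard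
      = 2 * Fintype.card ((T.induce (orchR T S)).ConnectedComponent) := by
    rw [Finset.sum_congr rfl (fun c _ => hodC c), Finset.sum_const, smul_eq_mul, mul_comm,
      Finset.card_univ]
  -- components meet disjoint sets of crossing edges
  have hcompdisj : 2 * Fintype.card ((T.induce (orchR T S)).ConnectedComponent)
      ≤ {e ∈ T.edgeSet | ¬ ∃ j, ∀ v ∈ e, f v = j}.ncard := by
    rw [aux_conv]
    have hconv2 : ∀ c : (T.induce (orchR T S)).ConnectedComponent,
        {e ∈ T.edgeSet | (¬ ∃ j, ∀ v ∈ e, f v = j) ∧ ∃ v ∈ e, f v = Sum.inr (Sum.inr c)}.ncard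
        = ((T.edgeFinset.filter (fun e => ¬ ∃ j, ∀ v ∈ e, f v = j)).filter
            (fun e => ∃ v ∈ e, f v = Sum.inr (Sum.inr c))).card := by
      intro c
      rw [Finset.filter_filter, ← aux_conv]
    have hdisj : ∀ c ∈ (Finset.univ : Finset ((T.induce (orchR T S)).ConnectedComponent)),
        ∀ d ∈ (Finset.univ : Finset ((T.induce (orchR T S)).ConnectedComponent)), c ≠ d →
        Disjoint ((T.edgeFinset.filter (fun e => ¬ ∃ j, ∀ v ∈ e, f v = j)).filter
            (fun e => ∃ v ∈ e, f v = Sum.inr (Sum.inr c)))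
          ((T.edgeFinset.filter (fun e => ¬ ∃ j, ∀ v ∈ e, f v = j)).filter
            (fun e => ∃ v ∈ e, f v = Sum.inr (Sum.inr d))) := by
      intro c _ d _ hcd
      rw [Finset.disjoint_left]
      intro e hec hed
      rw [Finset.mem_filter] at hec hed
      obtain ⟨hce, v, hv, hfv⟩ := hec
      obtain ⟨-, v2, hv2, hfv2⟩ := hed
      rw [Finset.mem_filter, mem_edgeFinset] at hce
      have hvne : v ≠ v2 := by
        rintro rfl
        rw [hfv] at hfv2
        simp only [Sum.inr.injEq] at hfv2
        exact hcd hfv2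
      have he : e = s(v, v2) := by
        revert hv hv2
        induction e using Sym2.inductionOn with
        | _ x y =>
          intro hv hv2
          rcases Sym2.mem_iff.mp hv with rfl | rfl <;>
            rcases Sym2.mem_iff.mp hv2 with rfl | rfl
          · exact absurd rfl hvne
          · rfl
          · exact Sym2.eq_swap
          · exact absurd rfl hvne
      have hadj : T.Adj v v2 := by
        have h5 := hce.1
        rw [he, mem_edgeSet] at h5
        exact h5
      rw [hf] at hfv hfv2
      obtain ⟨hr, hmk⟩ := (blockOf_c T S).mp hfv
      obtain ⟨hr2, hmk2⟩ := (blockOf_c T S).mp hfv2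
      have hadj' : (T.induce (orchR T S)).Adj ⟨v, hr⟩ ⟨v2, hr2⟩ := hadj
      exact hcd (by rw [← hmk, ← hmk2]; exact ConnectedComponent.sound hadj'.reachable)
    have hb := Finset.card_biUnion hdisj
    have hsub : (Finset.univ.biUnion
        (fun c : (T.induce (orchR T S)).ConnectedComponent =>
          (T.edgeFinset.filter (fun e => ¬ ∃ j, ∀ v ∈ e, f v = j)).filter
            (fun e => ∃ v ∈ e, f v = Sum.inr (Sum.inr c)))).card
        ≤ (T.edgeFinset.filter (fun e => ¬ ∃ j, ∀ v ∈ e, f v = j)).card := by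
      apply Finset.card_le_card
      intro e he
      rw [Finset.mem_biUnion] at he
      obtain ⟨c, -, hec⟩ := he
      exact Finset.mem_of_mem_filter e hec
    rw [hb] at hsub
    calc 2 * Fintype.card ((T.induce (orchR T S)).ConnectedComponent)
        = ∑ c : (T.induce (orchR T S)).ConnectedComponent,
          ((T.edgeFinset.filter (fun e => ¬ ∃ j, ∀ v ∈ e, f v = j)).filter
            (fun e => ∃ v ∈ e, f v = Sum.inr (Sum.inr c))).card := by
          rw [← hcsum]
          exact Finset.sum_congr rfl (fun c _ => hconv2 c)
      _ ≤ _ := hsub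
  -- final arithmetic
  have hwa : Fintype.card ↥(orchW T S) + 2 ≤ a := by
    rw [hcard] at hM1
    omega
  have hka : Fintype.card ((T.induce (orchR T S)).ConnectedComponent) + 1
      ≤ a + Fintype.card ↥(orchW T S) := by
    rw [hcard] at hM1
    omega
  have hgw : Set.ncard {w : VT | w ∉ (⋃ i, S i) ∧ 3 ≤ (T.neighborSet w).ncard}
      = Fintype.card ↥(orchW T S) := by
    rw [show {w : VT | w ∉ (⋃ i, S i) ∧ 3 ≤ (T.neighborSet w).ncard} = orchW T S from rfl,
      ← Nat.card_coe_set_eq, Nat.card_eq_fintype_card]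
  have hgk : Nat.card ((T.induce
      ((⋃ i, S i) ∪ {w : VT | w ∉ (⋃ i, S i) ∧
        3 ≤ (T.neighborSet w).ncard})ᶜ).ConnectedComponent)
      = Fintype.card ((T.induce (orchR T S)).ConnectedComponent) := by
    rw [show ((⋃ i, S i) ∪ {w : VT | w ∉ (⋃ i, S i) ∧
        3 ≤ (T.neighborSet w).ncard})ᶜ = orchR T S from rfl, Nat.card_eq_fintype_card]
  rw [hgw, hgk]
  constructor
  · omega
  · obtain ⟨b, rfl⟩ : ∃ b, a = b + 2 := ⟨a - 2, by omega⟩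
    have hexp : (b + 2) ^ 2 = b * b + 4 * b + 4 := by ring
    rw [hexp]
    have hbb : 0 ≤ b * b := Nat.zero_le _
    omega
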